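/- Let A be an abelian category and V a quasi-tilting object of A (i.e. all coproducts of copies of V exist and Gen(V) = sub-Gen(V) ∩ Ker(Ext^1_A(V,−))). Then Gen(V) = Pres(V). -/

import Mathlib

open CategoryTheory CategoryTheory.Limits

universe v u

namespace Paper

variable {C : Type u} [Category.{v} C] [Abelian C]

/-- `X` is `V`-generated. -/
def Gen (V : C) [∀ I : Type v, HasCoproduct (fun _ : I => V)] (X : C) : Prop :=
  ∃ (I : Type v) (p : (∐ (fun _ : I => V)) ⟶ X), Epi p

/-- `X` is `V`-presented: there is an exact sequence `V^{(J)} → V^{(I)} → X → 0`. -/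
def Pres (V : C) [∀ I : Type v, HasCoproduct (fun _ : I => V)] (X : C) : Prop :=
  ∃ (I J : Type v) (g : (∐ (fun _ : J => V)) ⟶ (∐ (fun _ : I => V)))
    (p : (∐ (fun _ : I => V)) ⟶ X) (w : g ≫ p = 0),
      Epi p ∧ (ShortComplex.mk g p w).Exact

/-- `X` is `V`-subgenerated: `X` is (isomorphic to) a subobject of a `V`-generated
object. -/
def SubGen (V : C) [∀ I : Type v, HasCoproduct (fun _ : I => V)] (X : C) : Prop :=
  ∃ Y : C, Gen V Y ∧ ∃ i : X ⟶ Y, Mono i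

/-- `Ext¹(V, X) = 0`: every short exact sequence `0 → X → E → V → 0` splits. -/
def ext1Zero (V X : C) : Prop :=
  ∀ (E : C) (a : X ⟶ E) (b : E ⟶ V) (w : a ≫ b = 0),
    (ShortComplex.mk a b w).ShortExact → ∃ s : V ⟶ E, s ≫ b = 𝟙 V

/-- If `c : B ⟶ M` is a cokernel of `i : K ⟶ B`, then the induced map out of the pushout
of `i` and `a` is a cokernel of `pushout.inr i a`. -/
noncomputable def pushoutCokernelInr {K B E M : C} (i : K ⟶ B) (a : K ⟶ E)
    (c : B ⟶ M) (w : i ≫ c = 0) (hc : IsColimit (CokernelCofork.ofπ c w)) [Epi c] :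
    IsColimit (CokernelCofork.ofπ
      (pushout.desc c 0 (by rw [w, comp_zero]) : pushout i a ⟶ M)
      (pushout.inr_desc _ _ _)) := by
  haveI : Epi (pushout.desc c 0 (by rw [w, comp_zero]) : pushout i a ⟶ M) :=
    epi_of_epi_fac (pushout.inl_desc c 0 (by rw [w, comp_zero]))
  refine CokernelCofork.IsColimit.ofπ' _ _ (fun {A} k hk => ?_)
  have h1 : i ≫ pushout.inl i a ≫ k = 0 := by
    rw [← Category.assoc, pushout.condition, Category.assoc, hk, comp_zero]
  obtain ⟨l, hl⟩ := CokernelCofork.IsColimit.desc' hc (pushout.inl i a ≫ k) h1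
  refine ⟨l, ?_⟩
  apply pushout.hom_ext
  · rw [← Category.assoc, pushout.inl_desc]; exact hl
  · rw [← Category.assoc, pushout.inr_desc, zero_comp]; exact hk.symm

/-- If `c : E ⟶ M` is a cokernel of `a : K ⟶ E`, then the induced map out of the pushout
of `i` and `a` is a cokernel of `pushout.inl i a`. -/
noncomputable def pushoutCokernelInl {K B E M : C} (i : K ⟶ B) (a : K ⟶ E)
    (c : E ⟶ M) (w : a ≫ c = 0) (hc : IsColimit (CokernelCofork.ofπ c w)) [Epi c] :
    IsColimit (CokernelCofork.ofπ
      (pushout.desc 0 c (by rw [w, comp_zero]) : pushout i a ⟶ M)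
      (pushout.inl_desc _ _ _)) := by
  haveI : Epi (pushout.desc 0 c (by rw [w, comp_zero]) : pushout i a ⟶ M) :=
    epi_of_epi_fac (pushout.inr_desc 0 c (by rw [w, comp_zero]))
  refine CokernelCofork.IsColimit.ofπ' _ _ (fun {A} k hk => ?_)
  have h1 : a ≫ pushout.inr i a ≫ k = 0 := by
    rw [← Category.assoc, ← pushout.condition, Category.assoc, hk, comp_zero]
  obtain ⟨l, hl⟩ := CokernelCofork.IsColimit.desc' hc (pushout.inr i a ≫ k) h1
  refine ⟨l, ?_⟩
  apply pushout.hom_ext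
  · rw [← Category.assoc, pushout.inl_desc, zero_comp]; exact hk.symm
  · rw [← Category.assoc, pushout.inr_desc]; exact hl

/-- for a quasi-tilting object `V`
(`Gen(V) = sub-Gen(V) ∩ Ker Ext¹(V,−)`), one has `Gen(V) = Pres(V)`. -/
theorem statement7 (V : C) [∀ I : Type v, HasCoproduct (fun _ : I => V)]
    (hqt : ∀ X : C, Gen V X ↔ (SubGen V X ∧ ext1Zero V X)) :
    ∀ X : C, Gen V X ↔ Pres V X := by
  intro M
  constructor
  · rintro ⟨I, p₀, hp₀⟩
    -- the canonical map from the coproduct over all morphisms `V ⟶ M`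
    set J : Type v := (V ⟶ M) with hJ
    set p : (∐ (fun _ : J => V)) ⟶ M := Sigma.desc (fun f => f) with hp
    -- `p` is epi since `p₀` factors through it
    have hfac : p₀ = (Sigma.desc (fun i : I => Sigma.ι (fun _ : J => V)
        (Sigma.ι (fun _ : I => V) i ≫ p₀))) ≫ p := by
      apply Sigma.hom_ext
      intro i
      simp [hp]
    haveI hpe : Epi p := by
      exact epi_of_epi_fac hfac.symm
    set K : C := kernel p with hK
    set i : K ⟶ (∐ (fun _ : J => V)) := kernel.ι p with hi
    -- `V^{(J)}` is generated by `V`, hence `Ext¹(V, V^{(J)}) = 0`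
    have hVJ : Gen V (∐ (fun _ : J => V)) := ⟨J, 𝟙 _, inferInstance⟩
    have hextVJ : ext1Zero V (∐ (fun _ : J => V)) := ((hqt _).1 hVJ).2
    -- `K ∈ SubGen V`
    have hKsub : SubGen V K := ⟨_, hVJ, i, inferInstance⟩
    -- `p` is a cokernel of `i`
    have hpcoker : IsColimit (CokernelCofork.ofπ p (kernel.condition p)) :=
      Abelian.epiIsCokernelOfKernel
        (KernelFork.ofι (kernel.ι p) (kernel.condition p)) (kernelIsKernel p)
    -- `Ext¹(V, K) = 0`
    have hKext : ext1Zero V K := by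
      intro E a b w hse
      haveI := hse.mono_f
      haveI := hse.epi_g
      -- form the pushout
      set F : C := pushout i a with hF
      set b' : F ⟶ V := pushout.desc 0 b (by rw [w, comp_zero]) with hb'
      set q : F ⟶ M := pushout.desc p 0 (by rw [kernel.condition, comp_zero]) with hq
      -- first pushout sequence `0 → V^{(J)} → F → V → 0` is short exact
      have hbcoker : IsColimit (CokernelCofork.ofπ b w) := hse.exact.gIsCokernel
      haveI : Epi b' := epi_of_epi_fac (pushout.inr_desc 0 b (by rw [w, comp_zero]))
      have hseq1 : (ShortComplex.mk (pushout.inl i a) b'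
          (pushout.inl_desc _ _ _)).ShortExact :=
        ⟨(ShortComplex.mk (pushout.inl i a) b'
          (pushout.inl_desc _ _ _)).exact_of_g_is_cokernel
          (pushoutCokernelInl i a b w hbcoker)⟩
      -- apply Ext vanishing to get a section `s` of `b'`
      obtain ⟨s, hs⟩ := hextVJ F (pushout.inl i a) b' (pushout.inl_desc _ _ _) hseq1
      -- second pushout sequence is exact at `F`
      have hseq2 : (ShortComplex.mk (pushout.inr i a) q
          (pushout.inr_desc _ _ _)).Exact :=
        (ShortComplex.mk (pushout.inr i a) q (pushout.inr_desc _ _ _)).exact_of_g_is_cokernel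
          (pushoutCokernelInr i a p (kernel.condition p) hpcoker)
      -- the composite `s ≫ q : V ⟶ M` factors through `p`
      set t : V ⟶ (∐ (fun _ : J => V)) := Sigma.ι (fun _ : J => V) (s ≫ q) with ht
      have htp : t ≫ p = s ≫ q := by simp [ht, hp]
      set u : V ⟶ F := s - t ≫ pushout.inl i a with hu
      have huq : u ≫ q = 0 := by
        simp only [hu, Preadditive.sub_comp, Category.assoc]
        rw [pushout.inl_desc]
        rw [htp]
        simp
      -- lift `u` through `E`
      obtain ⟨v, hv⟩ := hseq2.lift' u huq
      refine ⟨v, ?_⟩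
      have hib : pushout.inr i a ≫ b' = b := pushout.inr_desc _ _ _
      calc v ≫ b = v ≫ pushout.inr i a ≫ b' := by rw [hib]
        _ = u ≫ b' := by rw [← Category.assoc, hv]
        _ = 𝟙 V := by
            simp only [hu, Preadditive.sub_comp, Category.assoc, hs]
            rw [pushout.inl_desc]
            simp
    -- conclude `K ∈ Gen V` and build the presentation
    obtain ⟨I', e, he⟩ := (hqt K).2 ⟨hKsub, hKext⟩
    refine ⟨J, I', e ≫ i, p, by rw [Category.assoc, kernel.condition, comp_zero],
      hpe, ?_⟩
    rw [ShortComplex.exact_iff_epi_kernel_lift]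
    have : kernel.lift p (e ≫ i) (by rw [Category.assoc, kernel.condition, comp_zero]) = e := by
      apply (cancel_mono (kernel.ι p)).1
      simp [hi]
    rw [this]
    exact he
  · rintro ⟨I, J, g, p, w, hp, _⟩
    exact ⟨I, p, hp⟩

end Paper
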